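/- Let A be a pure state informationally complete POVM on C^3 that is not informationally complete. Then R(A)^⊥ is one-dimensional, spanned by an invertible (full rank) traceless selfadjoint 3×3 matrix S. -/

import Mathlib

open Matrix Kronecker
open scoped ComplexOrder

noncomputable section

def IsPOVM {n : Type*} [Fintype n] [DecidableEq n] {m : ℕ}
    (A : Fin m → Matrix n n ℂ) : Prop :=
  (∀ x, (A x).PosSemidef) ∧ ∑ x, A x = 1

def IsState {n : Type*} [Fintype n] [DecidableEq n] (ρ : Matrix n n ℂ) : Prop :=
  ρ.PosSemidef ∧ ρ.trace = 1

def IsPureState {n : Type*} [Fintype n] [DecidableEq n] (ρ : Matrix n n ℂ) : Prop :=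
  ρ.IsHermitian ∧ ρ * ρ = ρ ∧ ρ.rank = 1

def Rspan {n : Type*} [Fintype n] [DecidableEq n] {ι : Type*}
    (A : ι → Matrix n n ℂ) : Submodule ℝ (Matrix n n ℂ) :=
  Submodule.span ℝ (Set.range A)

def RPerp {n : Type*} [Fintype n] [DecidableEq n] {m : ℕ}
    (A : Fin m → Matrix n n ℂ) : Set (Matrix n n ℂ) :=
  {T | T.IsHermitian ∧ ∀ S ∈ Rspan A, (S * T).trace = 0}

def herm (n : Type*) [Fintype n] [DecidableEq n] : Submodule ℝ (Matrix n n ℂ) where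
  carrier := {T | T.IsHermitian}
  add_mem' := fun h1 h2 => h1.add h2
  zero_mem' := Matrix.isHermitian_zero
  smul_mem' := fun c T h => by
    rw [Set.mem_setOf_eq, Matrix.IsHermitian, Matrix.conjTranspose_smul, star_trivial, h]

def hermPerp {n : Type*} [Fintype n] [DecidableEq n]
    (V : Submodule ℝ (Matrix n n ℂ)) : Submodule ℝ (Matrix n n ℂ) where
  carrier := {T | T.IsHermitian ∧ ∀ S ∈ V, (S * T).trace = 0}
  add_mem' := fun h1 h2 => ⟨h1.1.add h2.1, fun S hS => by
    rw [mul_add, Matrix.trace_add, h1.2 S hS, h2.2 S hS, add_zero]⟩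
  zero_mem' := ⟨Matrix.isHermitian_zero, fun S _ => by simp⟩
  smul_mem' := fun c T h => ⟨by
      rw [Matrix.IsHermitian, Matrix.conjTranspose_smul, star_trivial, h.1],
    fun S hS => by rw [Matrix.mul_smul, Matrix.trace_smul, h.2 S hS, smul_zero]⟩

def tensSub {nA nB : Type*} [Fintype nA] [DecidableEq nA] [Fintype nB] [DecidableEq nB]
    (U : Submodule ℝ (Matrix nA nA ℂ)) (V : Submodule ℝ (Matrix nB nB ℂ)) :
    Submodule ℝ (Matrix (nA × nB) (nA × nB) ℂ) :=
  Submodule.span ℝ {T | ∃ S ∈ U, ∃ R ∈ V, T = S ⊗ₖ R}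

noncomputable def rankPM {n : Type*} [Fintype n] [DecidableEq n]
    (T : Matrix n n ℂ) (hT : T.IsHermitian) : ℕ :=
  min (Finset.univ.filter fun i => 0 < hT.eigenvalues i).card
      (Finset.univ.filter fun i => hT.eigenvalues i < 0).card


namespace Stmt13Aux

open Polynomial Filter

lemma trace_stdBasisMatrix_mul {n : Type*} [Fintype n] [DecidableEq n] (i j : n) (c : ℂ)
    (M : Matrix n n ℂ) : (Matrix.single i j c * M).trace = c * M j i := by
  simp [Matrix.trace, Matrix.diag, Matrix.mul_apply, Matrix.single, Matrix.of_apply,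
    ite_and]

lemma eval_charpoly' {n : Type*} [Fintype n] [DecidableEq n] (M : Matrix n n ℂ) (c : ℂ) :
    M.charpoly.eval c = (c • (1 : Matrix n n ℂ) - M).det := by
  unfold Matrix.charpoly
  rw [← Polynomial.coe_evalRingHom, RingHom.map_det]
  congr 1
  ext i j
  by_cases h : i = j
  · subst h
    simp [Matrix.charmatrix_apply_eq, Matrix.sub_apply, Matrix.smul_apply, Matrix.one_apply]
  · simp [Matrix.charmatrix_apply_ne _ _ _ h, Matrix.sub_apply, Matrix.smul_apply,
      Matrix.one_apply, h]

lemma herm_det_real {n : Type*} [Fintype n] [DecidableEq n] {T : Matrix n n ℂ}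
    (hT : T.IsHermitian) : ∃ r : ℝ, T.det = (r : ℂ) :=
  ⟨∏ i, hT.eigenvalues i, by rw [hT.det_eq_prod_eigenvalues]; push_cast; rfl⟩

lemma herm_trace {n : Type*} [Fintype n] [DecidableEq n] {T : Matrix n n ℂ}
    (hT : T.IsHermitian) : T.trace = ((∑ i, hT.eigenvalues i : ℝ) : ℂ) := by
  conv_lhs => rw [hT.spectral_theorem]
  rw [Unitary.conjStarAlgAut_apply, Matrix.trace_mul_cycle, Unitary.coe_star_mul_self, one_mul, Matrix.trace_diagonal]
  push_cast
  rfl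

lemma rank_le_three (T : Matrix (Fin 3) (Fin 3) ℂ) : T.rank ≤ 3 := by
  simpa using T.rank_le_card_width

lemma eq_zero_of_rank_zero {T : Matrix (Fin 3) (Fin 3) ℂ} (hT : T.IsHermitian)
    (h0 : T.rank = 0) : T = 0 := by
  rw [hT.rank_eq_card_non_zero_eigs, Fintype.card_eq_zero_iff] at h0
  have hall : ∀ i, hT.eigenvalues i = 0 := fun i => by
    by_contra hne; exact h0.false ⟨i, hne⟩
  conv_lhs => rw [hT.spectral_theorem]
  have : (RCLike.ofReal ∘ hT.eigenvalues : Fin 3 → ℂ) = fun _ => 0 := by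
    funext i; simp [hall i]
  rw [this]
  simp [Matrix.diagonal_zero]

lemma rank_ne_one_of_traceless {T : Matrix (Fin 3) (Fin 3) ℂ} (hT : T.IsHermitian)
    (htr : T.trace = 0) : T.rank ≠ 1 := by
  intro h1
  rw [hT.rank_eq_card_non_zero_eigs] at h1
  rw [herm_trace hT] at htr
  have hsum : ∑ i, hT.eigenvalues i = 0 := by exact_mod_cast htr
  obtain ⟨⟨a, ha⟩, hall⟩ := Fintype.card_eq_one_iff.mp h1
  have h0 : ∀ i, i ≠ a → hT.eigenvalues i = 0 := by
    intro i hi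
    by_contra hne
    exact hi (congrArg Subtype.val (hall ⟨i, hne⟩))
  rw [Finset.sum_eq_single a (fun i _ hi => h0 i hi) (by simp)] at hsum
  exact ha hsum

lemma det_ne_zero_of_rank_three {T : Matrix (Fin 3) (Fin 3) ℂ} (hT : T.IsHermitian)
    (h3 : T.rank = 3) : T.det ≠ 0 := by
  rw [hT.det_eq_prod_eigenvalues]
  rw [hT.rank_eq_card_non_zero_eigs] at h3
  refine Finset.prod_ne_zero_iff.mpr fun i _ => ?_
  intro hzi
  have hi0 : hT.eigenvalues i = 0 := Complex.ofReal_eq_zero.mp hzi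
  have := Fintype.card_subtype_lt (p := fun i => hT.eigenvalues i ≠ 0) (x := i) (by simp [hi0])
  rw [h3, Fintype.card_fin] at this
  omega

def Phi (n : Type*) [Fintype n] [DecidableEq n] :
    Matrix n n ℂ →ₗ[ℝ] Module.Dual ℝ (Matrix n n ℂ) where
  toFun M :=
    { toFun := fun S => ((S * M).trace).re
      map_add' := by intros; simp [Matrix.add_mul]
      map_smul' := by intros; simp [Matrix.smul_mul, Complex.real_smul, Complex.mul_re] }
  map_add' := by intros; ext S; simp [Matrix.mul_add]
  map_smul' := by intros; ext S; simp [Matrix.mul_smul, Complex.real_smul, Complex.mul_re]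

lemma Phi_inj (n : Type*) [Fintype n] [DecidableEq n] : Function.Injective (Phi n) := by
  rw [← LinearMap.ker_eq_bot, LinearMap.ker_eq_bot']
  intro M hM
  have h : ∀ S, ((S * M).trace).re = 0 := fun S => LinearMap.congr_fun hM S
  ext i j
  have h1 := h (Matrix.single j i 1)
  have h2 := h (Matrix.single j i Complex.I)
  rw [trace_stdBasisMatrix_mul] at h1 h2
  simp only [one_mul, Complex.I_mul_re] at h1 h2
  simp only [Matrix.zero_apply]
  exact Complex.ext (by simpa using h1) (by simpa using neg_eq_zero.mp h2)

lemma Phi_surj (n : Type*) [Fintype n] [DecidableEq n] : Function.Surjective (Phi n) := by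
  have h1 : Module.finrank ℝ (LinearMap.range (Phi n)) = Module.finrank ℝ (Matrix n n ℂ) :=
    LinearMap.finrank_range_of_inj (Phi_inj n)
  have h2 := Subspace.dual_finrank_eq (K := ℝ) (V := Matrix n n ℂ)
  rw [← LinearMap.range_eq_top]
  exact Submodule.eq_top_of_finrank_eq (h1.trans h2.symm)

lemma cubic_real_root (q : Polynomial ℝ) (h3 : q.natDegree = 3) (hm : q.coeff 3 = 1) :
    ∃ c : ℝ, q.eval c = 0 := by
  have hq0 : q ≠ 0 := fun h => by simp [h] at hm
  have hdeg : 0 < q.degree := by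
    rw [Polynomial.degree_eq_natDegree hq0, h3]; norm_num
  have hlc : q.leadingCoeff = 1 := by rw [Polynomial.leadingCoeff, h3, hm]
  have htop : Tendsto (fun x => q.eval x) atTop atTop :=
    q.tendsto_atTop_of_leadingCoeff_nonneg hdeg (by rw [hlc]; norm_num)
  obtain ⟨b, hb⟩ := (htop.eventually_ge_atTop 1).exists
  set q' : Polynomial ℝ := q.comp (-X) with hq'
  have hndX : (-X : Polynomial ℝ).natDegree = 1 := by simp
  have hlc' : q'.leadingCoeff = -1 := by
    rw [hq', Polynomial.leadingCoeff_comp (by rw [hndX]; norm_num)]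
    simp [hlc, h3]; norm_num
  have hdeg' : 0 < q'.degree := by
    have : q'.natDegree = 3 := by rw [hq', Polynomial.natDegree_comp, hndX, h3, mul_one]
    rw [Polynomial.degree_eq_natDegree (fun h => by simp [h] at hlc'), this]; norm_num
  have hbot : Tendsto (fun x => q'.eval x) atTop atBot :=
    q'.tendsto_atBot_of_leadingCoeff_nonpos hdeg' (by rw [hlc']; norm_num)
  obtain ⟨a, ha⟩ := (hbot.eventually_le_atBot (-1)).exists
  rw [hq', Polynomial.eval_comp] at ha
  simp only [Polynomial.eval_neg, Polynomial.eval_X] at ha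
  have hcont : ContinuousOn (fun x => q.eval x) (Set.uIcc (-a) b) :=
    (Polynomial.continuous q).continuousOn
  have h0 : (0:ℝ) ∈ Set.uIcc (q.eval (-a)) (q.eval b) := by
    rw [Set.mem_uIcc]; left; constructor <;> linarith
  obtain ⟨c, _, hc⟩ := intermediate_value_uIcc hcont h0
  exact ⟨c, hc⟩

lemma real_root_of_cubic (p : Polynomial ℂ) (h3 : p.natDegree = 3) (hm : p.coeff 3 = 1)
    (him : ∀ c : ℝ, (p.eval (c : ℂ)).im = 0) : ∃ c : ℝ, p.eval (c : ℂ) = 0 := by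
  set q : Polynomial ℝ := ∑ i ∈ Finset.range 4, C (p.coeff i).re * X ^ i with hq
  have hqc : ∀ k, q.coeff k = if k ∈ Finset.range 4 then (p.coeff k).re else 0 := by
    intro k
    rw [hq, Polynomial.finset_sum_coeff]
    simp only [Polynomial.coeff_C_mul, Polynomial.coeff_X_pow]
    rw [Finset.sum_congr rfl (fun i _ => by rw [mul_ite, mul_one, mul_zero, eq_comm])]
    exact Finset.sum_ite_eq (Finset.range 4) k (fun i => (p.coeff i).re)
  have hq3 : q.coeff 3 = 1 := by rw [hqc]; simp [hm]
  have hqnd : q.natDegree = 3 := by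
    refine le_antisymm (Polynomial.natDegree_le_iff_coeff_eq_zero.mpr fun k hk => ?_)
      (Polynomial.le_natDegree_of_ne_zero (by rw [hq3]; norm_num))
    rw [hqc, if_neg (by simp; omega)]
  have heval : ∀ c : ℝ, ((q.eval c : ℝ) : ℂ) = p.eval (c : ℂ) := by
    intro c
    have hp : p.eval (c : ℂ) = ∑ i ∈ Finset.range 4, p.coeff i * (c : ℂ) ^ i := by
      rw [Polynomial.eval_eq_sum_range, h3]
    have hre : (p.eval (c : ℂ)).re = ∑ i ∈ Finset.range 4, (p.coeff i).re * c ^ i := by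
      rw [hp, Complex.re_sum]
      refine Finset.sum_congr rfl fun i _ => ?_
      simp [← Complex.ofReal_pow, Complex.mul_re]
    have hqe : q.eval c = ∑ i ∈ Finset.range 4, (p.coeff i).re * c ^ i := by
      rw [hq]
      simp [Polynomial.eval_finset_sum]
    apply Complex.ext
    · rw [Complex.ofReal_re, hqe, hre]
    · simp [him c]
  obtain ⟨c, hc⟩ := cubic_real_root q hqnd hq3
  exact ⟨c, by rw [← heval c, hc, Complex.ofReal_zero]⟩

end Stmt13Aux

open Stmt13Aux

/-- A pure state informationally complete POVM on `C^3` which is not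
informationally complete has `R(A)^⊥` one-dimensional, spanned by an invertible (rank 3)
traceless selfadjoint matrix. -/
theorem stmt13 {m : ℕ} (A : Fin m → Matrix (Fin 3) (Fin 3) ℂ) (hA : IsPOVM A)
    (hPSIC : ¬ ∃ T ∈ hermPerp (Rspan A), T.rank = 2)
    (hnIC : Rspan A ≠ herm (Fin 3)) :
    ∃ S : Matrix (Fin 3) (Fin 3) ℂ, S.IsHermitian ∧ S.trace = 0 ∧ S.rank = 3 ∧
      hermPerp (Rspan A) = Submodule.span ℝ {S} := by
  by_cases hPSIC' : True
  swap
  · exact absurd trivial hPSIC'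
  classical
  set V := Rspan A with hV
  have hVherm : V ≤ herm (Fin 3) := by
    rw [hV, Rspan, Submodule.span_le]
    rintro x ⟨i, rfl⟩
    exact (hA.1 i).isHermitian
  have hone : (1 : Matrix (Fin 3) (Fin 3) ℂ) ∈ V := by
    rw [← hA.2]
    exact Submodule.sum_mem _ fun x _ => Submodule.subset_span ⟨x, rfl⟩
  have hkey : ∀ X : Matrix (Fin 3) (Fin 3) ℂ, X ∈ hermPerp V → X ≠ 0 → X.rank = 3 := by
    intro X hX hne
    have hXh : X.IsHermitian := hX.1
    have htr : X.trace = 0 := by have := hX.2 1 hone; rwa [one_mul] at this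
    have h2 : X.rank ≠ 2 := fun h2 => hPSIC ⟨X, hX, h2⟩
    have h0 : X.rank ≠ 0 := fun h0 => hne (eq_zero_of_rank_zero hXh h0)
    have h1 : X.rank ≠ 1 := rank_ne_one_of_traceless hXh htr
    have h3 := rank_le_three X
    omega
  obtain ⟨x, hxh, hxV⟩ : ∃ x, x ∈ herm (Fin 3) ∧ x ∉ V := by
    by_contra h
    push_neg at h
    exact hnIC (le_antisymm hVherm h)
  obtain ⟨f, hfx, hfmap⟩ := Submodule.exists_dual_map_eq_bot_of_notMem hxV inferInstance
  have hfV : ∀ S ∈ V, f S = 0 := by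
    intro S hS
    have h := Submodule.mem_map_of_mem (f := f) hS
    rw [hfmap] at h
    simpa using h
  obtain ⟨M, hM⟩ := Phi_surj (Fin 3) f
  set T := ((1:ℝ)/2) • (M + Mᴴ) with hT
  have hTh : T.IsHermitian := by
    rw [Matrix.IsHermitian, hT, Matrix.conjTranspose_smul, star_trivial,
      Matrix.conjTranspose_add, Matrix.conjTranspose_conjTranspose, add_comm]
  have htrT : ∀ S : Matrix (Fin 3) (Fin 3) ℂ, S.IsHermitian →
      (S * T).trace = ((f S : ℝ) : ℂ) := by
    intro S hS
    have hz : (S * Mᴴ).trace = (starRingEnd ℂ) ((S * M).trace) := by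
      have h1 : S * Mᴴ = (M * S)ᴴ := by rw [Matrix.conjTranspose_mul, hS.eq]
      rw [h1, Matrix.trace_conjTranspose, Matrix.trace_mul_comm]
      rfl
    have hfS : f S = ((S * M).trace).re := by rw [← hM]; rfl
    rw [hT, Matrix.mul_smul, Matrix.trace_smul, Matrix.mul_add, Matrix.trace_add, hz,
      Complex.add_conj, hfS, Complex.real_smul]
    push_cast
    ring
  have hTmem : T ∈ hermPerp V := by
    refine ⟨hTh, fun S hS => ?_⟩
    rw [htrT S (hVherm hS), hfV S hS, Complex.ofReal_zero]
  have hTne : T ≠ 0 := by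
    intro h
    have h2 := htrT x hxh
    rw [h, mul_zero, Matrix.trace_zero] at h2
    exact hfx (by exact_mod_cast h2.symm)
  have hTrank : T.rank = 3 := hkey T hTmem hTne
  have hTtr : T.trace = 0 := by have := hTmem.2 1 hone; rwa [one_mul] at this
  have hdT : T.det ≠ 0 := det_ne_zero_of_rank_three hTh hTrank
  have hdTu : IsUnit T.det := isUnit_iff_ne_zero.mpr hdT
  refine ⟨T, hTh, hTtr, hTrank, le_antisymm ?_ ?_⟩
  · -- hermPerp V ≤ span {T}
    intro T' hT'
    rw [Submodule.mem_span_singleton]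
    set N := T⁻¹ * T' with hN
    set p := N.charpoly with hp
    have hp3 : p.natDegree = 3 := by
      rw [hp, Matrix.charpoly_natDegree_eq_dim, Fintype.card_fin]
    have hpm : p.coeff 3 = 1 := by
      have := (Matrix.charpoly_monic N).coeff_natDegree
      rwa [hp3] at this
    have hsm : ∀ c : ℝ, (c : ℂ) • T = c • T := by
      intro c; ext i j; simp [Matrix.smul_apply, Complex.real_smul]
    have hmemc : ∀ c : ℝ, T' - (c : ℂ) • T ∈ hermPerp V := by
      intro c
      rw [hsm c]
      exact Submodule.sub_mem _ hT' (Submodule.smul_mem _ c hTmem)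
    have hdet : ∀ z : ℂ, (T' - z • T).det = T.det * (-(p.eval z)) := by
      intro z
      have h1 : T' - z • T = T * (N - z • 1) := by
        rw [Matrix.mul_sub, hN, Matrix.mul_nonsing_inv_cancel_left _ _ hdTu,
          Matrix.mul_smul, mul_one]
      rw [h1, Matrix.det_mul]
      congr 1
      rw [show N - z • 1 = -(z • 1 - N) from (neg_sub _ _).symm, Matrix.det_neg,
        Fintype.card_fin, hp, eval_charpoly']
      ring
    have him : ∀ c : ℝ, (p.eval (c : ℂ)).im = 0 := by
      intro c
      obtain ⟨r1, hr1⟩ := herm_det_real (hmemc c).1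
      obtain ⟨r0, hr0⟩ := herm_det_real hTh
      have hd := hdet (c : ℂ)
      rw [hr1, hr0] at hd
      have hr0ne : (r0 : ℂ) ≠ 0 := by rw [← hr0]; exact hdT
      have h5 : p.eval (c : ℂ) * (r0 : ℂ) = -(r1 : ℂ) := by linear_combination hd
      have hpe : p.eval (c : ℂ) = -((r1 : ℂ) / (r0 : ℂ)) := by
        calc p.eval (c : ℂ) = p.eval (c : ℂ) * (r0 : ℂ) / (r0 : ℂ) :=
              (mul_div_cancel_right₀ _ hr0ne).symm
          _ = -(r1 : ℂ) / (r0 : ℂ) := by rw [h5]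
          _ = -((r1 : ℂ) / (r0 : ℂ)) := neg_div _ _
      rw [hpe, ← Complex.ofReal_div, ← Complex.ofReal_neg, Complex.ofReal_im]
    obtain ⟨c, hc⟩ := real_root_of_cubic p hp3 hpm him
    have hdz : (T' - (c : ℂ) • T).det = 0 := by rw [hdet, hc]; ring
    have hzero : T' - (c : ℂ) • T = 0 := by
      by_contra hne
      exact det_ne_zero_of_rank_three (hmemc c).1 (hkey _ (hmemc c) hne) hdz
    refine ⟨c, ?_⟩
    rw [← hsm c]
    rw [sub_eq_zero] at hzero
    exact hzero.symm
  · -- span {T} ≤ hermPerp V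
    rw [Submodule.span_le]
    intro y hy
    rw [Set.mem_singleton_iff.mp hy]
    exact hTmem
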